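/- Let f₂(R) = ( R²·(2R² − 1) − (R⁴ − 1)·log(1 + R²) + 2R²·Li₂(−R²) ) / (2R·(1 + R²)). Then for all R > 0, f₂''(R) + f₂'(R)/R − (1/R² − 8/(1 + R²)²)·f₂(R) = −2R/(1 + R²). -/

import Mathlib

open Real

/-- The dilogarithm Li₂(x) = ∫₀^x (−log(1−y)/y) dy, defined for x ≤ 1. -/
noncomputable def Li2 (x : ℝ) : ℝ := ∫ y in (0:ℝ)..x, -Real.log (1 - y) / y

open MeasureTheory in
lemma Li2_hasDerivAt {x : ℝ} (hx : x < 0) :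
    HasDerivAt Li2 (-Real.log (1 - x) / x) x := by
  have hmeas : Measurable fun y : ℝ => -Real.log (1 - y) / y :=
    ((Real.measurable_log.comp (measurable_const.sub measurable_id)).neg).div measurable_id
  have hint : IntervalIntegrable (fun y : ℝ => -Real.log (1 - y) / y) volume 0 x := by
    rw [intervalIntegrable_iff]
    have hIoc : Set.uIoc (0:ℝ) x = Set.Ioc x 0 := by
      rw [Set.uIoc_comm, Set.uIoc_of_le hx.le]
    rw [hIoc]
    apply MeasureTheory.Integrable.mono' (integrable_const (1:ℝ))
      hmeas.aestronglyMeasurable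
    rw [ae_restrict_iff' measurableSet_Ioc]
    filter_upwards with y hy
    rcases eq_or_lt_of_le hy.2 with h0 | h0
    · subst h0; simp
    · have h1 : (0:ℝ) < 1 - y := by linarith
      have h2 : 0 ≤ Real.log (1 - y) := Real.log_nonneg (by linarith)
      have h3 : Real.log (1 - y) ≤ -y := by
        have := Real.log_le_sub_one_of_pos h1; linarith
      have he : -Real.log (1 - y) / y = Real.log (1 - y) / (-y) := by
        rw [div_neg, neg_div]
      rw [he, Real.norm_eq_abs, abs_of_nonneg (div_nonneg h2 (by linarith))]
      rw [div_le_one (by linarith)]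
      exact h3
  have hcont : ContinuousAt (fun y : ℝ => -Real.log (1 - y) / y) x := by
    apply ContinuousAt.div
    · exact ((Real.continuousAt_log (by linarith : (1:ℝ) - x ≠ 0)).comp
        (by fun_prop : ContinuousAt (fun y : ℝ => 1 - y) x)).neg
    · exact continuousAt_id
    · exact ne_of_lt hx
  have hsm : StronglyMeasurableAtFilter (fun y : ℝ => -Real.log (1 - y) / y) (nhds x) volume :=
    ⟨Set.univ, Filter.univ_mem, (hmeas.aestronglyMeasurable).restrict⟩
  exact intervalIntegral.integral_hasDerivAt_right hint hsm hcont

noncomputable def g1 (t : ℝ) : ℝ :=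
  (t^2 + 9*t^4 + 15*t^6 + 7*t^8
    - (1 + 9*t^2 + 22*t^4 + 22*t^6 + 9*t^8 + t^10) * Real.log (1 + t^2)
    + (2*t^2 + 2*t^4 - 2*t^6 - 2*t^8) * Li2 (-t^2)) / (2*t^2*(1 + t^2)^4)

noncomputable def g2 (s : ℝ) : ℝ :=
  (-(s^2 + 9*s^4 + 49*s^6 + 176*s^8 + 406*s^10 + 602*s^12 + 574*s^14 + 344*s^16
      + 121*s^18 + 21*s^20 + s^22)
    + (1 + 8*s^2 + 35*s^4 + 112*s^6 + 266*s^8 + 448*s^10 + 518*s^12 + 400*s^14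
      + 197*s^16 + 56*s^18 + 7*s^20) * Real.log (1 + s^2)
    - (6*s^4 + 40*s^6 + 112*s^8 + 168*s^10 + 140*s^12 + 56*s^14 - 8*s^18 - 2*s^20)
      * Li2 (-s^2)) / (s^3*(1 + s^2)^10)

lemma aux_hL (s : ℝ) (hs : 0 < s) :
    HasDerivAt (fun t : ℝ => Real.log (1 + t^2)) (2*s/(1+s^2)) s := by
  have h := (Real.hasDerivAt_log (by positivity : (1:ℝ)+s^2 ≠ 0)).comp s
    ((hasDerivAt_pow 2 s).const_add 1)
  refine h.congr_deriv ?_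
  push_cast
  field_simp
  try ring

lemma aux_hD (s : ℝ) (hs : 0 < s) :
    HasDerivAt (fun t : ℝ => Li2 (-t^2)) (-2*Real.log (1+s^2)/s) s := by
  have h := (Li2_hasDerivAt (x := -s^2) (by nlinarith)).comp s ((hasDerivAt_pow 2 s).neg)
  refine h.congr_deriv ?_
  rw [show (1:ℝ) - -s^2 = 1 + s^2 by ring]
  push_cast
  field_simp
  try ring

lemma lemA (s : ℝ) (hs : 0 < s) :
    HasDerivAt (fun s : ℝ =>
        (s^2 * (2*s^2 - 1) - (s^4 - 1) * Real.log (1 + s^2) + 2*s^2 * Li2 (-s^2))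
          / (2*s*(1 + s^2))) (g1 s) s := by
  have h1s : (0:ℝ) < 1 + s^2 := by positivity
  have hx : HasDerivAt (fun t : ℝ => t) 1 s := hasDerivAt_id s
  have hx2 : HasDerivAt (fun t : ℝ => t^2) (2*s) s := by
    simpa using hasDerivAt_pow 2 s
  have hx4 : HasDerivAt (fun t : ℝ => t^4) (4*s^3) s := by
    simpa using hasDerivAt_pow 4 s
  have hL := aux_hL s hs
  have hD := aux_hD s hs
  have h1 : HasDerivAt (fun t : ℝ => t^2 * (2*t^2 - 1))
      (2*s * (2*s^2-1) + s^2 * (2*(2*s))) s := hx2.mul ((hx2.const_mul 2).sub_const 1)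
  have h2 : HasDerivAt (fun t : ℝ => (t^4 - 1) * Real.log (1 + t^2))
      (4*s^3 * Real.log (1+s^2) + (s^4-1) * (2*s/(1+s^2))) s := (hx4.sub_const 1).mul hL
  have h3 : HasDerivAt (fun t : ℝ => 2*t^2 * Li2 (-t^2))
      (2*(2*s) * Li2 (-s^2) + 2*s^2 * (-2*Real.log (1+s^2)/s)) s :=
    (hx2.const_mul 2).mul hD
  have hN := (h1.sub h2).add h3
  have hden : HasDerivAt (fun t : ℝ => 2*t*(1 + t^2))
      (2*1*(1+s^2) + 2*s*(2*s)) s := (hx.const_mul 2).mul (hx2.const_add 1)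
  have hdiv := hN.div hden (by positivity)
  refine hdiv.congr_deriv ?_
  unfold g1
  have hs0 : s ≠ 0 := ne_of_gt hs
  have h1s' : (1:ℝ) + s^2 ≠ 0 := ne_of_gt h1s
  simp only [Pi.add_apply, Pi.sub_apply, Pi.mul_apply]
  field_simp
  ring

lemma lemB (s : ℝ) (hs : 0 < s) : HasDerivAt g1 (g2 s) s := by
  have h1s : (0:ℝ) < 1 + s^2 := by positivity
  have hx2 : HasDerivAt (fun t : ℝ => t^2) (2*s) s := by simpa using hasDerivAt_pow 2 s
  have hx4 : HasDerivAt (fun t : ℝ => t^4) (4*s^3) s := by simpa using hasDerivAt_pow 4 s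
  have hx6 : HasDerivAt (fun t : ℝ => t^6) (6*s^5) s := by simpa using hasDerivAt_pow 6 s
  have hx8 : HasDerivAt (fun t : ℝ => t^8) (8*s^7) s := by simpa using hasDerivAt_pow 8 s
  have hx10 : HasDerivAt (fun t : ℝ => t^10) (10*s^9) s := by simpa using hasDerivAt_pow 10 s
  have hL := aux_hL s hs
  have hD := aux_hD s hs
  have hA : HasDerivAt (fun t : ℝ => t^2 + 9*t^4 + 15*t^6 + 7*t^8)
      (2*s + 9*(4*s^3) + 15*(6*s^5) + 7*(8*s^7)) s :=
    ((hx2.add (hx4.const_mul 9)).add (hx6.const_mul 15)).add (hx8.const_mul 7)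
  have hBp : HasDerivAt (fun t : ℝ => 1 + (9*t^2 + 22*t^4 + 22*t^6 + 9*t^8 + t^10))
      (9*(2*s) + 22*(4*s^3) + 22*(6*s^5) + 9*(8*s^7) + 10*s^9) s :=
    (((((hx2.const_mul 9).add (hx4.const_mul 22)).add (hx6.const_mul 22)).add
      (hx8.const_mul 9)).add hx10).const_add 1
  have hBp' : HasDerivAt (fun t : ℝ => 1 + 9*t^2 + 22*t^4 + 22*t^6 + 9*t^8 + t^10)
      (9*(2*s) + 22*(4*s^3) + 22*(6*s^5) + 9*(8*s^7) + 10*s^9) s := by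
    convert hBp using 2; ring
  have hB := hBp'.mul hL
  have hC : HasDerivAt (fun t : ℝ => 2*t^2 + 2*t^4 - 2*t^6 - 2*t^8)
      (2*(2*s) + 2*(4*s^3) - 2*(6*s^5) - 2*(8*s^7)) s :=
    (((hx2.const_mul 2).add (hx4.const_mul 2)).sub (hx6.const_mul 2)).sub (hx8.const_mul 2)
  have hNum := (hA.sub hB).add (hC.mul hD)
  have hden : HasDerivAt (fun t : ℝ => 2*t^2*(1 + t^2)^4)
      (2*(2*s) * (1+s^2)^4 + 2*s^2 * (4 * (1+s^2)^3 * (2*s))) s := by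
    have := (hx2.const_mul 2).mul ((hx2.const_add 1).pow 4)
    refine this.congr_deriv ?_
    simp only [Pi.pow_apply]
    try push_cast
    try ring
  have hdiv := hNum.div hden (by positivity)
  unfold g1 g2
  refine hdiv.congr_deriv ?_
  have hs0 : s ≠ 0 := ne_of_gt hs
  have h1s' : (1:ℝ) + s^2 ≠ 0 := ne_of_gt h1s
  simp only [Pi.add_apply, Pi.sub_apply, Pi.mul_apply]
  field_simp
  ring

/-- f₂ solves the linearized elliptic equation with right-hand side −2R/(1 + R²). -/
theorem stmt9 :
    ∀ R : ℝ, 0 < R →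
      deriv (deriv (fun s : ℝ =>
          (s^2 * (2*s^2 - 1) - (s^4 - 1) * Real.log (1 + s^2) + 2*s^2 * Li2 (-s^2))
            / (2*s*(1 + s^2)))) R
        + deriv (fun s : ℝ =>
            (s^2 * (2*s^2 - 1) - (s^4 - 1) * Real.log (1 + s^2) + 2*s^2 * Li2 (-s^2))
              / (2*s*(1 + s^2))) R / R
        - (1/R^2 - 8/(1 + R^2)^2)
            * ((R^2 * (2*R^2 - 1) - (R^4 - 1) * Real.log (1 + R^2) + 2*R^2 * Li2 (-R^2))
                / (2*R*(1 + R^2)))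
      = -2 * R / (1 + R^2) := by
  intro R hR
  have hEq : deriv (fun s : ℝ =>
      (s^2 * (2*s^2 - 1) - (s^4 - 1) * Real.log (1 + s^2) + 2*s^2 * Li2 (-s^2))
        / (2*s*(1 + s^2))) =ᶠ[nhds R] g1 := by
    filter_upwards [IsOpen.mem_nhds isOpen_Ioi hR] with s hs
    exact ((lemA s hs).deriv)
  have hd1 : deriv (fun s : ℝ =>
      (s^2 * (2*s^2 - 1) - (s^4 - 1) * Real.log (1 + s^2) + 2*s^2 * Li2 (-s^2))
        / (2*s*(1 + s^2))) R = g1 R := (lemA R hR).deriv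
  have hd2 : deriv (deriv (fun s : ℝ =>
      (s^2 * (2*s^2 - 1) - (s^4 - 1) * Real.log (1 + s^2) + 2*s^2 * Li2 (-s^2))
        / (2*s*(1 + s^2)))) R = g2 R := by
    rw [Filter.EventuallyEq.deriv_eq hEq]
    exact (lemB R hR).deriv
  rw [hd1, hd2]
  unfold g1 g2
  have hR0 : R ≠ 0 := ne_of_gt hR
  have h1R : (1:ℝ) + R^2 ≠ 0 := by positivity
  field_simp
  ring
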